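/- Fix binary vectors x¹,…,x^k ∈ {0,1}^n. Then the worst-case cost cost(x¹,…,x^k) = sup_{c∈U^Γ} min_{j∈[k]} Σ_{i=1}^n c_i x^j_i equals the optimal value of the dualized problem: inf { Σ_{j=1}^k α_j Σ_{i=1}^n ĉ_i x^j_i + Γ·θ + Σ_{i=1}^n γ_i : α ∈ ℝ^k, θ ∈ ℝ, γ ∈ ℝ^n, α_j ≥ 0 for all j, Σ_{j=1}^k α_j = 1, θ ≥ 0, γ_i ≥ 0 for all i, and θ + γ_i ≥ Σ_{j=1}^k α_j d_i x^j_i for all i }. -/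

import Mathlib

/-- The budgeted uncertainty set `U^Γ`. -/
def budgetSet (n : ℕ) (chat d : Fin n → ℝ) (Γ : ℝ) : Set (Fin n → ℝ) :=
  {c | ∃ z : Fin n → ℝ, (∀ i, 0 ≤ z i ∧ z i ≤ 1) ∧ (∑ i, z i) ≤ Γ ∧ ∀ i, c i = chat i + d i * z i}

/-- The worst-case cost of the `k`-tuple `x` over the budgeted uncertainty set. -/
noncomputable def cost (n k : ℕ) (chat d : Fin n → ℝ) (Γ : ℝ) (x : Fin k → Fin n → ℝ) : ℝ :=
  sSup ((fun c => ⨅ j, ∑ i, c i * x j i) '' budgetSet n chat d Γ)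

open Finset

lemma knapsack_dual (n : ℕ) (w : Fin n → ℝ) (hw : ∀ i, 0 ≤ w i) (Γ : ℝ) (hΓ : 0 < Γ) :
    ∃ (z : Fin n → ℝ) (θ : ℝ) (γ : Fin n → ℝ),
      (∀ i, 0 ≤ z i ∧ z i ≤ 1) ∧ (∑ i, z i) ≤ Γ ∧ 0 ≤ θ ∧ (∀ i, 0 ≤ γ i) ∧
      (∀ i, w i ≤ θ + γ i) ∧ Γ * θ + ∑ i, γ i ≤ ∑ i, w i * z i := by
  classical
  set C : Finset ℝ := insert 0 (Finset.image w Finset.univ) with hC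
  have h0C : (0:ℝ) ∈ C := Finset.mem_insert_self _ _
  have hwC : ∀ i, w i ∈ C := fun i => Finset.mem_insert_of_mem (Finset.mem_image_of_mem w (mem_univ i))
  set S : Finset ℝ := C.filter (fun θ => ((univ.filter (fun i => θ < w i)).card : ℝ) ≤ Γ) with hS
  have hSne : S.Nonempty := by
    refine ⟨C.max' ⟨0, h0C⟩, Finset.mem_filter.2 ⟨C.max'_mem _, ?_⟩⟩
    have : (univ.filter (fun i => C.max' ⟨0, h0C⟩ < w i)) = ∅ := by
      refine Finset.filter_eq_empty_iff.2 fun i _ => not_lt.2 ?_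
      exact Finset.le_max' _ _ (hwC i)
    rw [this]; simpa using hΓ.le
  set θ : ℝ := S.min' hSne with hθdef
  have hθS : θ ∈ S := S.min'_mem hSne
  have hθC : θ ∈ C := (Finset.mem_filter.1 hθS).1
  set P : Finset (Fin n) := univ.filter (fun i => θ < w i) with hP
  have hp : ((P.card : ℝ)) ≤ Γ := (Finset.mem_filter.1 hθS).2
  have hθ0 : 0 ≤ θ := by
    rcases Finset.mem_insert.1 hθC with h | h
    · exact h.ge
    · rcases Finset.mem_image.1 h with ⟨i, _, hi⟩; rw [← hi]; exact hw i
  set γ : Fin n → ℝ := fun i => max (w i - θ) 0 with hγ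
  have hγ0 : ∀ i, 0 ≤ γ i := fun i => le_max_right _ _
  have hfeas : ∀ i, w i ≤ θ + γ i := by
    intro i
    have : w i - θ ≤ γ i := le_max_left _ _
    linarith
  have hγsum : ∑ i, γ i = ∑ i ∈ P, (w i - θ) := by
    rw [← Finset.sum_filter_add_sum_filter_not univ (fun i => θ < w i) γ]
    have h1 : ∑ i ∈ P, γ i = ∑ i ∈ P, (w i - θ) := by
      refine Finset.sum_congr rfl fun i hi => ?_
      have := (Finset.mem_filter.1 hi).2
      simp only [hγ]; rw [max_eq_left]; linarith
    have h2 : ∑ i ∈ univ.filter (fun i => ¬ θ < w i), γ i = 0 := by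
      refine Finset.sum_eq_zero fun i hi => ?_
      have := (Finset.mem_filter.1 hi).2
      simp only [hγ]; rw [max_eq_right]; push_neg at this; linarith
    rw [h1, h2, add_zero]
  by_cases hθz : θ = 0
  · -- z = indicator of P
    refine ⟨fun i => if θ < w i then 1 else 0, θ, γ, ?_, ?_, hθ0, hγ0, hfeas, ?_⟩
    · intro i; by_cases h : θ < w i <;> simp [h]
    · rw [Finset.sum_boole]; exact hp
    · have hz : ∑ i, w i * (if θ < w i then (1:ℝ) else 0) = ∑ i ∈ P, w i := by
        rw [Finset.sum_filter]
        refine Finset.sum_congr rfl fun i _ => ?_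
        by_cases h : θ < w i <;> simp [h]
      rw [hz, hγsum, hθz]
      simp
  · -- θ > 0 case
    have hθpos : 0 < θ := lt_of_le_of_ne hθ0 (Ne.symm hθz)
    set T : Finset (Fin n) := univ.filter (fun i => w i = θ) with hT
    have hTne : T.Nonempty := by
      rcases Finset.mem_insert.1 hθC with h | h
      · exact absurd h hθz
      · rcases Finset.mem_image.1 h with ⟨i, _, hi⟩
        exact ⟨i, Finset.mem_filter.2 ⟨mem_univ i, hi⟩⟩
    set t : ℕ := T.card with ht
    have htpos : 0 < (t:ℝ) := by exact_mod_cast Finset.card_pos.2 hTne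
    -- the largest candidate below θ
    have h0C' : (0:ℝ) ∈ C.filter (· < θ) := Finset.mem_filter.2 ⟨h0C, hθpos⟩
    set θ' : ℝ := (C.filter (· < θ)).max' ⟨0, h0C'⟩ with hθ'
    have hθ'mem : θ' ∈ C.filter (· < θ) := Finset.max'_mem _ _
    have hθ'C : θ' ∈ C := (Finset.mem_filter.1 hθ'mem).1
    have hθ'lt : θ' < θ := (Finset.mem_filter.1 hθ'mem).2
    have hθ'notS : θ' ∉ S := by
      intro h
      exact absurd (Finset.min'_le S θ' h) (not_le.2 hθ'lt)
    have hbig : Γ < ((univ.filter (fun i => θ' < w i)).card : ℝ) := by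
      by_contra h
      exact hθ'notS (Finset.mem_filter.2 ⟨hθ'C, not_lt.1 h⟩)
    have hfilt : univ.filter (fun i => θ' < w i) = univ.filter (fun i => θ ≤ w i) := by
      refine Finset.filter_congr fun i _ => ?_
      constructor
      · intro hi
        by_contra hcon
        push_neg at hcon
        have : w i ∈ C.filter (· < θ) := Finset.mem_filter.2 ⟨hwC i, hcon⟩
        exact absurd (Finset.le_max' _ _ this) (not_le.2 hi)
      · intro hi; exact lt_of_lt_of_le hθ'lt hi
    have hsplit : univ.filter (fun i => θ ≤ w i) = P ∪ T := by
      rw [hP, hT, ← Finset.filter_or]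
      refine Finset.filter_congr fun i _ => ?_
      constructor
      · intro hi; rcases lt_or_eq_of_le hi with h | h
        · exact Or.inl h
        · exact Or.inr h.symm
      · intro hi
        rcases hi with h | h
        · exact le_of_lt h
        · exact le_of_eq h.symm
    have hdisj : Disjoint P T := by
      rw [Finset.disjoint_left]
      intro i hiP hiT
      have h1 := (Finset.mem_filter.1 hiP).2
      have h2 := (Finset.mem_filter.1 hiT).2
      exact absurd h2 (ne_of_gt h1)
    have hcard : Γ < (P.card : ℝ) + (t : ℝ) := by
      have := hbig
      rw [hfilt, hsplit, Finset.card_union_of_disjoint hdisj] at this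
      push_cast at this
      linarith
    set c : ℝ := (Γ - P.card) / t with hc
    have hc0 : 0 ≤ c := div_nonneg (by linarith) htpos.le
    have hc1 : c ≤ 1 := by
      rw [hc, div_le_one htpos]; linarith
    have htne : (t:ℝ) ≠ 0 := ne_of_gt htpos
    have htc : (t:ℝ) * c = Γ - (P.card:ℝ) := by
      rw [hc]
      field_simp
    set z : Fin n → ℝ := fun i => if θ < w i then 1 else if w i = θ then c else 0 with hz
    have hsum_gen : ∀ f : Fin n → ℝ, ∑ i, f i * z i = ∑ i ∈ P, f i + (∑ i ∈ T, f i) * c := by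
      intro f
      rw [← Finset.sum_filter_add_sum_filter_not univ (fun i => θ < w i) (fun i => f i * z i)]
      have h1 : ∑ i ∈ P, f i * z i = ∑ i ∈ P, f i := by
        refine Finset.sum_congr rfl fun i hi => ?_
        have := (Finset.mem_filter.1 hi).2
        simp only [hz]; rw [if_pos this, mul_one]
      have h2 : ∑ i ∈ univ.filter (fun i => ¬ θ < w i), f i * z i = (∑ i ∈ T, f i) * c := by
        have : ∀ i ∈ univ.filter (fun i => ¬ θ < w i), f i * z i
            = (if w i = θ then f i * c else 0) := by
          intro i hi
          have hni := (Finset.mem_filter.1 hi).2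
          simp only [hz]; rw [if_neg hni]
          by_cases h : w i = θ
          · rw [if_pos h, if_pos h]
          · rw [if_neg h, if_neg h, mul_zero]
        rw [Finset.sum_congr rfl this, ← Finset.sum_filter, Finset.filter_filter]
        rw [Finset.sum_mul]
        refine Finset.sum_congr ?_ fun _ _ => rfl
        rw [hT]
        refine Finset.filter_congr fun i _ => ?_
        constructor
        · rintro ⟨_, h⟩; exact h
        · intro h; exact ⟨by rw [h]; exact lt_irrefl θ, h⟩
      rw [h1, h2]
    refine ⟨z, θ, γ, ?_, ?_, hθ0, hγ0, hfeas, ?_⟩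
    · intro i
      simp only [hz]
      by_cases h1 : θ < w i
      · simp [h1]
      · by_cases h2 : w i = θ <;> simp [h1, h2, hc0, hc1]
    · have : ∑ i, z i = ∑ i, (1:ℝ) * z i := by simp
      rw [this, hsum_gen]
      simp only [Finset.sum_const, nsmul_eq_mul, mul_one]
      rw [htc]
      linarith
    · rw [hsum_gen w, hγsum]
      have hTsum : ∑ i ∈ T, w i = (t:ℝ) * θ := by
        rw [ht]
        rw [Finset.sum_congr rfl (fun i hi => (Finset.mem_filter.1 hi).2)]
        simp [mul_comm]
        exact Or.inl rfl
      rw [hTsum, Finset.sum_sub_distrib]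
      simp only [Finset.sum_const, nsmul_eq_mul, mul_one]
      have : (t:ℝ) * θ * c = θ * (Γ - P.card) := by
        rw [mul_comm (t:ℝ) θ, mul_assoc, htc]
      rw [this]
      ring_nf
      nlinarith [htc]

/-- the worst-case cost equals the optimal value of the dualized problem. -/
theorem stmt0 (n k : ℕ) (hn : 1 ≤ n) (hk : 1 ≤ k)
    (chat d : Fin n → ℝ) (hd : ∀ i, 0 ≤ d i) (Γ : ℝ) (hΓ : 0 < Γ)
    (x : Fin k → Fin n → ℝ) (hx : ∀ j i, x j i = 0 ∨ x j i = 1) :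
    cost n k chat d Γ x =
      sInf {v : ℝ | ∃ (α : Fin k → ℝ) (θ : ℝ) (γ : Fin n → ℝ),
        (∀ j, 0 ≤ α j) ∧ (∑ j, α j) = 1 ∧ 0 ≤ θ ∧ (∀ i, 0 ≤ γ i) ∧
        (∀ i, θ + γ i ≥ ∑ j, α j * (d i * x j i)) ∧
        v = (∑ j, α j * ∑ i, chat i * x j i) + Γ * θ + ∑ i, γ i} := by
  classical
  haveI : Nonempty (Fin k) := ⟨⟨0, hk⟩⟩
  have hx0 : ∀ j i, 0 ≤ x j i := by
    intro j i; rcases hx j i with h | h <;> rw [h] <;> norm_num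
  have hx1 : ∀ j i, x j i ≤ 1 := by
    intro j i; rcases hx j i with h | h <;> rw [h] <;> norm_num
  set Z : Set (Fin n → ℝ) := {z | (∀ i, 0 ≤ z i ∧ z i ≤ 1) ∧ (∑ i, z i) ≤ Γ} with hZdef
  set g : Fin k → (Fin n → ℝ) → ℝ :=
    fun j z => (∑ i, chat i * x j i) + ∑ i, (d i * x j i) * z i with hg
  set F : (Fin n → ℝ) → ℝ := fun z => ⨅ j, g j z with hF
  -- the image rewriting
  have hval : ∀ (z : Fin n → ℝ) (j : Fin k),
      ∑ i, (chat i + d i * z i) * x j i = g j z := by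
    intro z j
    simp only [hg]
    rw [← Finset.sum_add_distrib]
    refine Finset.sum_congr rfl fun i _ => ?_
    ring
  have himage : (fun c => ⨅ j, ∑ i, c i * x j i) '' budgetSet n chat d Γ = F '' Z := by
    ext v
    constructor
    · rintro ⟨c, ⟨z, hz1, hz2, hz3⟩, rfl⟩
      refine ⟨z, ⟨hz1, hz2⟩, ?_⟩
      simp only [hF]
      refine congrArg _ (funext fun j => ?_)
      rw [← hval z j]
      exact Finset.sum_congr rfl fun i _ => by rw [hz3 i]
    · rintro ⟨z, ⟨hz1, hz2⟩, rfl⟩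
      refine ⟨fun i => chat i + d i * z i, ⟨z, hz1, hz2, fun i => rfl⟩, ?_⟩
      simp only [hF]
      exact congrArg _ (funext fun j => hval z j)
  have hZ0 : (fun _ => (0:ℝ)) ∈ Z := by
    constructor
    · intro i; norm_num
    · simp; linarith
  have hgF : ∀ (z : Fin n → ℝ) (j : Fin k), F z ≤ g j z := by
    intro z j
    exact ciInf_le (Set.Finite.bddBelow (Set.finite_range _)) j
  set j₀ : Fin k := ⟨0, hk⟩ with hj₀
  set B : ℝ := (∑ i, chat i * x j₀ i) + ∑ i, d i with hB
  have hFB : ∀ z ∈ Z, F z ≤ B := by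
    intro z hz
    refine (hgF z j₀).trans ?_
    simp only [hg, hB]
    have hle : ∑ i, d i * x j₀ i * z i ≤ ∑ i, d i :=
      Finset.sum_le_sum fun i _ =>
        le_trans (mul_le_of_le_one_right (mul_nonneg (hd i) (hx0 j₀ i)) (hz.1 i).2)
          (mul_le_of_le_one_right (hd i) (hx1 j₀ i))
    linarith
  have hbdd : BddAbove (F '' Z) := by
    refine ⟨B, ?_⟩
    rintro y ⟨z, hz, rfl⟩
    exact hFB z hz
  have hne : (F '' Z).Nonempty := ⟨F (fun _ => 0), ⟨_, hZ0, rfl⟩⟩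
  set M : ℝ := sSup (F '' Z) with hM
  have hMub : ∀ z ∈ Z, F z ≤ M := fun z hz => le_csSup hbdd ⟨z, hz, rfl⟩
  -- general algebra identity
  have halg : ∀ (α : Fin k → ℝ) (z : Fin n → ℝ),
      ∑ j, α j * g j z
        = (∑ j, α j * ∑ i, chat i * x j i) + ∑ i, (∑ j, α j * (d i * x j i)) * z i := by
    intro α z
    simp only [hg, mul_add]
    rw [Finset.sum_add_distrib]
    congr 1
    simp_rw [Finset.mul_sum, Finset.sum_mul]
    rw [Finset.sum_comm]
    refine Finset.sum_congr rfl fun i _ => Finset.sum_congr rfl fun j _ => by ring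
  -- weak duality
  have hweak : ∀ v ∈ {v : ℝ | ∃ (α : Fin k → ℝ) (θ : ℝ) (γ : Fin n → ℝ),
        (∀ j, 0 ≤ α j) ∧ (∑ j, α j) = 1 ∧ 0 ≤ θ ∧ (∀ i, 0 ≤ γ i) ∧
        (∀ i, θ + γ i ≥ ∑ j, α j * (d i * x j i)) ∧
        v = (∑ j, α j * ∑ i, chat i * x j i) + Γ * θ + ∑ i, γ i}, M ≤ v := by
    rintro v ⟨α, θ, γ, hα0, hα1, hθ0, hγ0, hfeas, rfl⟩
    refine csSup_le hne ?_
    rintro y ⟨z, hz, rfl⟩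
    have h1 : F z ≤ ∑ j, α j * g j z := by
      have : ∑ j, α j * F z ≤ ∑ j, α j * g j z :=
        Finset.sum_le_sum fun j _ => mul_le_mul_of_nonneg_left (hgF z j) (hα0 j)
      rwa [← Finset.sum_mul, hα1, one_mul] at this
    rw [halg α z] at h1
    refine h1.trans ?_
    have h2 : ∑ i, (∑ j, α j * (d i * x j i)) * z i ≤ Γ * θ + ∑ i, γ i := by
      have h3 : ∑ i, (∑ j, α j * (d i * x j i)) * z i ≤ ∑ i, (θ + γ i) * z i := by
        refine Finset.sum_le_sum fun i _ => ?_
        exact mul_le_mul_of_nonneg_right (hfeas i) (hz.1 i).1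
      refine h3.trans ?_
      have h4 : ∑ i, (θ + γ i) * z i = θ * ∑ i, z i + ∑ i, γ i * z i := by
        rw [Finset.mul_sum, ← Finset.sum_add_distrib]
        refine Finset.sum_congr rfl fun i _ => by ring
      rw [h4]
      have h5 : θ * ∑ i, z i ≤ Γ * θ := by
        rw [mul_comm Γ θ]
        exact mul_le_mul_of_nonneg_left hz.2 hθ0
      have h6 : ∑ i, γ i * z i ≤ ∑ i, γ i := by
        refine Finset.sum_le_sum fun i _ => ?_
        nlinarith [hγ0 i, (hz.1 i).1, (hz.1 i).2]
      linarith
    linarith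
  -- separation: find α in the simplex with ∑ j α j * g j z ≤ M for all z ∈ Z
  have hsep : ∃ α : Fin k → ℝ, (∀ j, 0 ≤ α j) ∧ (∑ j, α j) = 1 ∧
      ∀ z ∈ Z, ∑ j, α j * g j z ≤ M := by
    set O : Set (Fin k → ℝ) := {y | ∀ j, M < y j} with hO
    set L : Set (Fin k → ℝ) := {y | ∃ z ∈ Z, ∀ j, y j ≤ g j z} with hL
    have hOopen : IsOpen O := by
      have : O = ⋂ j, {y : Fin k → ℝ | M < y j} := by
        ext y; simp [hO, Set.mem_iInter]
      rw [this]
      exact isOpen_iInter_of_finite fun j =>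
        isOpen_lt continuous_const (continuous_apply j)
    have hOconv : Convex ℝ O := by
      have : O = ⋂ j, {y : Fin k → ℝ | M < y j} := by
        ext y; simp [hO, Set.mem_iInter]
      rw [this]
      exact convex_iInter fun j =>
        convex_halfSpace_gt ⟨fun _ _ => rfl, fun _ _ => rfl⟩ M
    have hZconv : Convex ℝ Z := by
      intro z1 hz1 z2 hz2 p q hp hq hpq
      constructor
      · intro i
        have e : (p • z1 + q • z2) i = p * z1 i + q * z2 i := rfl
        rw [e]
        constructor
        · exact add_nonneg (mul_nonneg hp (hz1.1 i).1) (mul_nonneg hq (hz2.1 i).1)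
        · nlinarith [(hz1.1 i).2, (hz2.1 i).2]
      · have e : ∑ i, (p • z1 + q • z2) i = p * ∑ i, z1 i + q * ∑ i, z2 i := by
          rw [Finset.mul_sum, Finset.mul_sum, ← Finset.sum_add_distrib]
          exact Finset.sum_congr rfl fun i _ => rfl
        rw [e]
        nlinarith [hz1.2, hz2.2]
    have hgaff : ∀ (j : Fin k) (z1 z2 : Fin n → ℝ) (p q : ℝ), p + q = 1 →
        g j (p • z1 + q • z2) = p * g j z1 + q * g j z2 := by
      intro j z1 z2 p q hpq
      simp only [hg]
      have e : ∑ i, (d i * x j i) * (p • z1 + q • z2) i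
          = p * ∑ i, (d i * x j i) * z1 i + q * ∑ i, (d i * x j i) * z2 i := by
        rw [Finset.mul_sum, Finset.mul_sum, ← Finset.sum_add_distrib]
        refine Finset.sum_congr rfl fun i _ => ?_
        have e2 : (p • z1 + q • z2) i = p * z1 i + q * z2 i := rfl
        rw [e2]; ring
      rw [e]
      linear_combination (-(∑ i : Fin n, chat i * x j i)) * hpq
    have hLconv : Convex ℝ L := by
      rintro y1 ⟨z1, hz1, h1⟩ y2 ⟨z2, hz2, h2⟩ p q hp hq hpq
      refine ⟨p • z1 + q • z2, hZconv hz1 hz2 hp hq hpq, fun j => ?_⟩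
      rw [hgaff j z1 z2 p q hpq]
      have e : (p • y1 + q • y2) j = p * y1 j + q * y2 j := rfl
      rw [e]
      nlinarith [h1 j, h2 j]
    have hdisj : Disjoint O L := by
      rw [Set.disjoint_left]
      rintro y hyO ⟨z, hzZ, hyle⟩
      obtain ⟨j, hj⟩ := exists_eq_ciInf_of_finite (f := fun j => g j z)
      have h1 : M < g j z := lt_of_lt_of_le (hyO j) (hyle j)
      have h2 : (⨅ i, g i z) ≤ M := hMub z hzZ
      rw [← hj] at h2
      linarith
    obtain ⟨f, u, hfO, hfL⟩ :=
      geometric_hahn_banach_open hOconv hOopen hLconv hdisj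
    -- the coefficient representation
    set e1 : Fin k → (Fin k → ℝ) := fun j => Pi.single j 1 with he1
    have hrep : ∀ y : Fin k → ℝ, f y = ∑ j, y j * f (e1 j) := by
      intro y
      have hy : y = ∑ j, y j • e1 j := by
        funext i
        rw [Finset.sum_apply]
        simp [he1, Pi.single_apply]
      conv_lhs => rw [hy]
      rw [map_sum]
      exact Finset.sum_congr rfl fun j _ => by rw [map_smul, smul_eq_mul]
    set α₀ : Fin k → ℝ := fun j => f (e1 j) with hα₀
    set y₀ : Fin k → ℝ := fun _ => M + 1 with hy₀def
    have hy₀O : y₀ ∈ O := fun j => by simp only [hy₀def]; norm_num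
    have hfy₀ : f y₀ < u := hfO _ hy₀O
    have hneg : ∀ j, α₀ j ≤ 0 := by
      intro j
      by_contra hpos
      push_neg at hpos
      set tt : ℝ := (u - f y₀) / α₀ j with htt
      have htt0 : 0 < tt := div_pos (by linarith) hpos
      have hy₁O : (y₀ + tt • e1 j) ∈ O := by
        intro j'
        have e : (y₀ + tt • e1 j) j' = M + 1 + tt * e1 j j' := rfl
        rw [e]
        have hps : (0:ℝ) ≤ e1 j j' := by
          simp only [he1]
          rcases eq_or_ne j' j with h | h
          · subst h; simp
          · simp [Pi.single_apply, h]
        nlinarith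
      have hlt := hfO _ hy₁O
      rw [map_add, map_smul, smul_eq_mul] at hlt
      have heq : tt * f (e1 j) = u - f y₀ := by
        rw [htt]
        exact div_mul_cancel₀ _ (ne_of_gt hpos)
      linarith
    set β : Fin k → ℝ := fun j => -α₀ j with hβ
    have hβ0 : ∀ j, 0 ≤ β j := fun j => neg_nonneg.2 (hneg j)
    set s : ℝ := ∑ j, β j with hs
    have hs0 : 0 ≤ s := Finset.sum_nonneg fun j _ => hβ0 j
    have hLy : (fun j => g j (fun _ => 0)) ∈ L :=
      ⟨(fun _ => 0), hZ0, fun j => le_refl _⟩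
    have hspos : 0 < s := by
      rcases lt_or_eq_of_le hs0 with h | h
      · exact h
      · exfalso
        have hβz : ∀ j, β j = 0 := by
          intro j
          have := (Finset.sum_eq_zero_iff_of_nonneg (fun j _ => hβ0 j)).1 h.symm
          exact this j (mem_univ j)
        have hfz : ∀ y, f y = 0 := by
          intro y
          rw [hrep]
          refine Finset.sum_eq_zero fun j _ => ?_
          have hz0 : α₀ j = 0 := by
            have h' := hβz j
            simpa [hβ, neg_eq_zero] using h'
          have : f (e1 j) = 0 := hz0
          rw [this, mul_zero]
        have h1 : (0:ℝ) < u := by have := hfy₀; rw [hfz] at this; linarith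
        have h2 : u ≤ 0 := by have := hfL _ hLy; rw [hfz] at this; linarith
        linarith
    have hβgM : ∀ z ∈ Z, ∑ j, β j * g j z ≤ s * M := by
      intro z hz
      have hL1 : (fun j => g j z) ∈ L := ⟨z, hz, fun j => le_refl _⟩
      have h1 : u ≤ f (fun j => g j z) := hfL _ hL1
      have h2 : f (fun j => g j z) = -∑ j, β j * g j z := by
        rw [hrep, ← Finset.sum_neg_distrib]
        refine Finset.sum_congr rfl fun j _ => ?_
        simp only [hβ, hα₀]; ring
      have h3 : ∑ j, β j * g j z ≤ -u := by
        rw [h2] at h1; linarith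
      have h4 : ∀ ε : ℝ, 0 < ε → -u < (M + ε) * s := by
        intro ε hε
        have hyO : (fun _ => M + ε) ∈ O := fun j => by
          simp only [Set.mem_setOf_eq]; linarith
        have := hfO _ hyO
        have he : f (fun _ => M + ε) = -((M + ε) * s) := by
          rw [hrep, hs, Finset.mul_sum, ← Finset.sum_neg_distrib]
          refine Finset.sum_congr rfl fun j _ => ?_
          simp only [hβ, hα₀]; ring
        rw [he] at this
        linarith
      have h5 : -u ≤ M * s := by
        by_contra hcon
        push_neg at hcon
        have hε : 0 < (-u - M * s) / (2 * s) := by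
          apply div_pos (by linarith) (by linarith)
        have h6 := h4 _ hε
        have h8 : (M + (-u - M * s) / (2 * s)) * s = M * s + (-u - M * s) / 2 := by
          field_simp
        rw [h8] at h6
        linarith
      nlinarith [h3, h5]
    refine ⟨fun j => β j / s, fun j => div_nonneg (hβ0 j) hs0, ?_, ?_⟩
    · rw [← Finset.sum_div, ← hs, div_self (ne_of_gt hspos)]
    · intro z hz
      have h1 : ∑ j, (β j / s) * g j z = (∑ j, β j * g j z) / s := by
        rw [Finset.sum_div]
        exact Finset.sum_congr rfl fun j _ => by ring
      rw [h1, div_le_iff₀ hspos]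
      have := hβgM z hz
      linarith [hβgM z hz]
  -- strong duality: construct a dual feasible point with value ≤ M
  obtain ⟨α, hα0, hα1, hαM⟩ := hsep
  set w : Fin n → ℝ := fun i => ∑ j, α j * (d i * x j i) with hw
  have hw0 : ∀ i, 0 ≤ w i := by
    intro i
    exact Finset.sum_nonneg fun j _ =>
      mul_nonneg (hα0 j) (mul_nonneg (hd i) (hx0 j i))
  obtain ⟨z, θ, γ, hz1, hz2, hθ0, hγ0, hfeas, hdual⟩ := knapsack_dual n w hw0 Γ hΓ
  set v : ℝ := (∑ j, α j * ∑ i, chat i * x j i) + Γ * θ + ∑ i, γ i with hv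
  have hvmem : v ∈ {v : ℝ | ∃ (α : Fin k → ℝ) (θ : ℝ) (γ : Fin n → ℝ),
        (∀ j, 0 ≤ α j) ∧ (∑ j, α j) = 1 ∧ 0 ≤ θ ∧ (∀ i, 0 ≤ γ i) ∧
        (∀ i, θ + γ i ≥ ∑ j, α j * (d i * x j i)) ∧
        v = (∑ j, α j * ∑ i, chat i * x j i) + Γ * θ + ∑ i, γ i} :=
    ⟨α, θ, γ, hα0, hα1, hθ0, hγ0, fun i => hfeas i, rfl⟩
  have hvM : v ≤ M := by
    have h1 : v ≤ (∑ j, α j * ∑ i, chat i * x j i) + ∑ i, w i * z i := by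
      rw [hv]; linarith [hdual]
    have h2 : (∑ j, α j * ∑ i, chat i * x j i) + ∑ i, w i * z i
        = ∑ j, α j * g j z := by
      rw [halg α z]
    have h3 : ∑ j, α j * g j z ≤ M := hαM z ⟨hz1, hz2⟩
    linarith
  -- conclude
  rw [show cost n k chat d Γ x = M by rw [cost, himage]]
  refine le_antisymm (le_csInf ⟨v, hvmem⟩ hweak) ?_
  exact le_trans (csInf_le ⟨M, fun v' hv' => hweak v' hv'⟩ hvmem) hvM
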